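/- Let ω ∈ G(r,s,n) and write ω = ρ_m ⋯ ρ_1 with each ρ_j a reflection of the form σ_{ij}^{k/r} (transpose coordinates i,j and scale by ζ_r^{∓k}) or τ_i^{sk/r} (scale coordinate i by ζ_r^{sk}). Associate to this tuple the ordered labeled graph γ with edge e_j = {i,j} labeled k for ρ_j = σ_{ij}^{k/r} and self-edge {i,i} labeled k for ρ_j = τ_i^{sk/r}. Then for every vertex i, ω(v_i) = ζ_r^{κ(w_i)} v_{h(w_i)}, where w_i is the ordered edge walk from i, h(w_i) its endpoint, and κ(w_i) the signed weight of the walk (up-steps contribute +k, down-steps −k, loops +sk). -/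

import Mathlib

def WreathZS (r n : ℕ) : Type := Equiv.Perm (Fin n) × (Fin n → ZMod r)
namespace WreathZS
variable {r n : ℕ}
instance : Mul (WreathZS r n) :=
  ⟨fun x y => (x.1 * y.1, (fun i => x.2 (y.1 i)) + y.2)⟩
instance : One (WreathZS r n) := ⟨((1 : Equiv.Perm (Fin n)), 0)⟩
instance : Inv (WreathZS r n) :=
  ⟨fun x => (x.1⁻¹, fun i => -x.2 (x.1⁻¹ i))⟩
theorem mul_def (x y : WreathZS r n) :
    x * y = (x.1 * y.1, (fun i => x.2 (y.1 i)) + y.2) := rfl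
theorem one_def : (1 : WreathZS r n) = ((1 : Equiv.Perm (Fin n)), 0) := rfl
instance : Group (WreathZS r n) where
  mul_assoc x y z := by
    simp only [mul_def]
    refine Prod.ext (mul_assoc _ _ _) ?_
    funext i
    exact add_assoc _ _ _
  one_mul x := by
    simp only [mul_def, one_def]
    refine Prod.ext (one_mul _) ?_
    funext i; exact zero_add _
  mul_one x := by
    simp only [mul_def, one_def]
    refine Prod.ext (mul_one _) ?_
    funext i; exact add_zero _
  inv_mul_cancel x := by
    show (_, _) = (_, _)
    refine Prod.ext (inv_mul_cancel _) ?_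
    funext i
    simp [Inv.inv]
end WreathZS

/-- The complex reflection group `G(r,s,n)`, modeled as the subgroup of the
wreath product `(ZMod r) ≀ Sₙ` of pairs `(σ, a)` such that `∑ i, a i` is
divisible by `s` in `ZMod r`. -/
def Grsn (r s n : ℕ) : Subgroup (WreathZS r n) where
  carrier := {x | ∃ c : ZMod r, ∑ i, x.2 i = (s : ZMod r) * c}
  mul_mem' := by
    rintro x y ⟨c, hc⟩ ⟨d, hd⟩
    refine ⟨c + d, ?_⟩
    simp only [WreathZS.mul_def, Pi.add_apply]
    rw [Finset.sum_add_distrib, Equiv.sum_comp y.1 x.2, hc, hd, mul_add]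
  one_mem' := ⟨0, by simp [WreathZS.one_def]⟩
  inv_mem' := by
    rintro x ⟨c, hc⟩
    refine ⟨-c, ?_⟩
    show ∑ i, -x.2 (x.1⁻¹ i) = _
    rw [show (∑ i, -x.2 (x.1⁻¹ i)) = ∑ i, (fun j => -x.2 j) (x.1⁻¹ i) from rfl,
      Equiv.sum_comp x.1⁻¹ (fun j => -x.2 j), Finset.sum_neg_distrib, hc]
    ring

/-- `walkEndWt s L v` returns the endpoint and the signed weight `κ` of the
sequential ordered edge walk starting at `v` in the labeled graph `L`: each
traversed non-self edge labeled `k` contributes `+k` if traversed towards the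
larger-indexed vertex (an up-step) and `-k` towards the smaller (a down-step),
while a self-edge labeled `k` contributes `s·k` (a loop). -/
def walkEndWt {n : ℕ} (s : ℕ) : List (Sym2 (Fin n) × ℤ) → Fin n → Fin n × ℤ
  | [], v => (v, 0)
  | (e, k) :: rest, v =>
    if h : v ∈ e then
      let u := Sym2.Mem.other' h
      let w := walkEndWt s rest u
      (w.1, (if u = v then (s : ℤ) * k else if v < u then k else -k) + w.2)
    else walkEndWt s rest v

/-- The reflection of `G(r,s,n)` (in the `(σ, a)` wreath model) associated to a
labeled edge: an edge `{i,j}` with `i < j` labeled `k` gives the reflection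
`σ_{ij}^{k/r}` (the pair `(swap i j, a)` with `a i = k`, `a j = -k`), and a
self-edge `{i,i}` labeled `k` gives `τ_i^{sk/r}` (the pair `(1, a)` with
`a i = s·k`). -/
def reflOf (r s n : ℕ) (ek : Sym2 (Fin n) × ℤ) : WreathZS r n :=
  Sym2.lift
    ⟨fun i j =>
      if i = j then ((1 : Equiv.Perm (Fin n)),
        fun l => if l = i then ((s : ℤ) * ek.2 : ℤ) else 0)
      else (Equiv.swap i j,
        fun l => if l = min i j then ((ek.2 : ℤ) : ZMod r)
          else if l = max i j then (-ek.2 : ℤ) else 0),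
      by
        intro a b
        by_cases h : a = b
        · subst h; simp; rfl
        · simp only [h, Ne.symm h, if_false, ↓reduceIte]
          rw [Equiv.swap_comm, min_comm, max_comm]⟩
    ek.1

lemma reflOf_mk (r s n : ℕ) (k : ℤ) (i j : Fin n) :
    reflOf r s n (s(i, j), k) =
      (if i = j then ((1 : Equiv.Perm (Fin n)),
        fun l => if l = i then (((s : ℤ) * k : ℤ) : ZMod r) else 0)
      else (Equiv.swap i j,
        fun l => if l = min i j then ((k : ℤ) : ZMod r)
          else if l = max i j then ((-k : ℤ) : ZMod r) else 0)) := rfl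

lemma reflOf_apply_mem (r s n : ℕ) (k : ℤ) (e : Sym2 (Fin n)) (v : Fin n)
    (h : v ∈ e) :
    (reflOf r s n (e, k)).1 v = Sym2.Mem.other' h ∧
    (reflOf r s n (e, k)).2 v =
      ((if Sym2.Mem.other' h = v then (s : ℤ) * k
        else if v < Sym2.Mem.other' h then k else -k : ℤ) : ZMod r) := by
  set u := Sym2.Mem.other' h with hu
  have he : e = s(v, u) := (Sym2.other_spec' h).symm
  rw [show ((e, k) : Sym2 (Fin n) × ℤ) = (s(v, u), k) by rw [he], reflOf_mk]
  by_cases hvu : u = v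
  · simp [hvu]
  · have h1 : ¬ v = u := fun h' => hvu h'.symm
    simp only [h1, if_false, hvu, if_false]
    constructor
    · exact Equiv.swap_apply_left v u
    · rcases lt_or_gt_of_ne h1 with hlt | hgt
      · rw [if_pos (by simp [min_eq_left hlt.le]), if_pos hlt]
      · rw [if_neg, if_pos (by simp [max_eq_left hgt.le]), if_neg (not_lt.2 hgt.le)]
        simp [min_eq_right hgt.le]
        exact h1

lemma reflOf_apply_not_mem (r s n : ℕ) (k : ℤ) (e : Sym2 (Fin n)) (v : Fin n)
    (h : ¬ v ∈ e) :
    (reflOf r s n (e, k)).1 v = v ∧ (reflOf r s n (e, k)).2 v = 0 := by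
  induction e using Sym2.inductionOn with
  | hf i j =>
    rw [Sym2.mem_iff] at h
    push_neg at h
    obtain ⟨hi, hj⟩ := h
    rw [reflOf_mk]
    by_cases hij : i = j
    · simp [hij, hj]
    · have hmin : v ≠ min i j := by rcases min_choice i j with h' | h' <;> rw [h'] <;> assumption
      have hmax : v ≠ max i j := by rcases max_choice i j with h' | h' <;> rw [h'] <;> assumption
      simp [hij, Equiv.swap_apply_of_ne_of_ne hi hj, hmin, hmax]

/-- **Factorizations and ordered edge walks** (Proposition 2.8). If
`ω = ρ_m ⋯ ρ_1 ∈ G(r,s,n)` is a product of reflections encoded by an ordered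
labeled graph `L` (edges `{i,j}` labeled `k` with `0 ≤ k < r` for reflections
`σ_{ij}^{k/r}`, self-edges labeled `k` with `0 < k < r/s` for `τ_i^{sk/r}`),
then for every vertex `i`, `ω(v_i) = ζ_r^{κ(w_i)} v_{h(w_i)}`: in the `(σ, a)`
model, `σ i = h(w_i)` and `a i = κ(w_i) mod r`, where `w_i` is the ordered edge
walk from `i`, `h(w_i)` its endpoint, and `κ(w_i)` its signed weight. -/
theorem factorization_graph_action (r s n : ℕ) (hr : 0 < r) (hs : 0 < s) (hsr : s ∣ r)
    (L : List (Sym2 (Fin n) × ℤ))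
    (hlab : ∀ ek ∈ L,
      (ek.1.IsDiag → 0 < ek.2 ∧ ek.2 < ((r / s : ℕ) : ℤ)) ∧
      (¬ ek.1.IsDiag → 0 ≤ ek.2 ∧ ek.2 < (r : ℤ))) :
    ∀ i : Fin n,
      ((L.map (reflOf r s n)).reverse.prod.1 i = (walkEndWt s L i).1) ∧
      ((L.map (reflOf r s n)).reverse.prod.2 i = ((walkEndWt s L i).2 : ZMod r)) := by
  induction L with
  | nil =>
    intro i
    exact ⟨rfl, by simp only [walkEndWt, List.map_nil, List.reverse_nil, List.prod_nil,
      WreathZS.one_def, Pi.zero_apply, Int.cast_zero]⟩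
  | cons ek rest ih =>
    intro i
    have ih' := ih (fun e he => hlab e (List.mem_cons_of_mem _ he))
    obtain ⟨e, k⟩ := ek
    have hprod : ((((e, k) :: rest).map (reflOf r s n)).reverse.prod)
        = ((rest.map (reflOf r s n)).reverse.prod) * reflOf r s n (e, k) := by
      simp
    rw [hprod, WreathZS.mul_def]
    by_cases h : i ∈ e
    · obtain ⟨h1, h2⟩ := reflOf_apply_mem r s n k e i h
      set u := Sym2.Mem.other' h with hu
      have hw : walkEndWt s ((e, k) :: rest) i =
          ((walkEndWt s rest u).1,
            (if u = i then (s : ℤ) * k else if i < u then k else -k)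
              + (walkEndWt s rest u).2) := by
        simp only [walkEndWt, dif_pos h]; rfl
      rw [hw]
      obtain ⟨ihu1, ihu2⟩ := ih' u
      refine ⟨?_, ?_⟩
      · show ((rest.map (reflOf r s n)).reverse.prod).1 ((reflOf r s n (e, k)).1 i) = _
        rw [h1]; exact ihu1
      · show ((rest.map (reflOf r s n)).reverse.prod).2 ((reflOf r s n (e, k)).1 i)
            + (reflOf r s n (e, k)).2 i = _
        rw [h1, ihu2, h2, Int.cast_add, add_comm]
    · obtain ⟨h1, h2⟩ := reflOf_apply_not_mem r s n k e i h
      have hw : walkEndWt s ((e, k) :: rest) i = walkEndWt s rest i := by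
        simp only [walkEndWt, dif_neg h]
      rw [hw]
      obtain ⟨ihi1, ihi2⟩ := ih' i
      refine ⟨?_, ?_⟩
      · show ((rest.map (reflOf r s n)).reverse.prod).1 ((reflOf r s n (e, k)).1 i) = _
        rw [h1]; exact ihi1
      · show ((rest.map (reflOf r s n)).reverse.prod).2 ((reflOf r s n (e, k)).1 i)
            + (reflOf r s n (e, k)).2 i = _
        rw [h1, h2, add_zero]; exact ihi2
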